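/- Let (P_t) be adapted to a filtration (ℱ_t) with P(P_t ≤ α | ℱ_{t−1}) ≤ α a.s. for all t and fixed α ∈ (0,1]. Let R_k be the time of the k-th event among {P_t ≤ α}. Then E[R_k] ≥ k/α for every integer k ≥ 1. -/

import Mathlib

open MeasureTheory ENNReal

namespace KARLAux

variable {Ω : Type*}

/-- counting process: number of alarms in `[1, t]`. -/
noncomputable def N (P : ℕ → Ω → ℝ) (α : ℝ) (t : ℕ) (ω : Ω) : ℕ :=
  ((Finset.Icc 1 t).filter (fun s => P s ω ≤ α)).card

lemma N_zero (P : ℕ → Ω → ℝ) (α : ℝ) (ω : Ω) : N P α 0 ω = 0 := by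
  simp [N]

lemma N_succ (P : ℕ → Ω → ℝ) (α : ℝ) (s : ℕ) (ω : Ω) :
    N P α (s + 1) ω = N P α s ω + (if P (s + 1) ω ≤ α then 1 else 0) := by
  unfold N
  rw [show Finset.Icc 1 (s + 1) = insert (s + 1) (Finset.Icc 1 s) by
    ext x; simp only [Finset.mem_Icc, Finset.mem_insert]; omega]
  rw [Finset.filter_insert]
  split_ifs with h
  · rw [Finset.card_insert_of_notMem (by simp)]
  · rfl

lemma N_mono (P : ℕ → Ω → ℝ) (α : ℝ) {t t' : ℕ} (h : t ≤ t') (ω : Ω) :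
    N P α t ω ≤ N P α t' ω := by
  apply Finset.card_le_card
  exact Finset.filter_subset_filter _ (Finset.Icc_subset_Icc_right h)

lemma N_meas {m0 : MeasurableSpace Ω} (ℱ : Filtration ℕ m0) (P : ℕ → Ω → ℝ)
    (hadapted : Adapted ℱ P) (α : ℝ) (t : ℕ) :
    Measurable[ℱ t] (N P α t) := by
  have : N P α t = fun ω => ∑ s ∈ Finset.Icc 1 t, (if P s ω ≤ α then 1 else 0) := by
    funext ω
    exact Finset.card_filter _ _
  rw [this]
  apply Finset.measurable_sum
  intro s hs
  have hsle : s ≤ t := (Finset.mem_Icc.mp hs).2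
  have hPs : Measurable[ℱ t] (P s) :=
    Measurable.mono (hadapted s) (ℱ.mono hsle) le_rfl
  exact Measurable.ite (measurableSet_le hPs measurable_const) measurable_const
      measurable_const

/-- The partial "stopped" count equals `min (N m) k`. -/
lemma stopped_sum (P : ℕ → Ω → ℝ) (α : ℝ) (k : ℕ) (m : ℕ) (ω : Ω) :
    ∑ s ∈ Finset.range m,
      (if P (s + 1) ω ≤ α ∧ N P α s ω < k then (1 : ℕ) else 0)
        = min (N P α m ω) k := by
  induction m with
  | zero => simp [N_zero]
  | succ m ih =>
    rw [Finset.sum_range_succ, ih, N_succ]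
    by_cases h1 : P (m + 1) ω ≤ α
    · by_cases h2 : N P α m ω < k
      · rw [if_pos ⟨h1, h2⟩, if_pos h1]; omega
      · rw [if_neg (by tauto), if_pos h1]; omega
    · rw [if_neg (by tauto), if_neg h1]; omega

end KARLAux

open KARLAux

/-- Under conditional super-uniformity with respect to a filtration,
the expected time to the `k`-th alarm (expressed via the survival-function formula)
is at least `k/α` for every integer `k ≥ 1`. -/
theorem kARL_lower_bound_conditional_superuniform
    {Ω : Type*} {m0 : MeasurableSpace Ω} (μ : Measure Ω) [IsProbabilityMeasure μ]
    (ℱ : Filtration ℕ m0) (P : ℕ → Ω → ℝ)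
    (hadapted : Adapted ℱ P)
    (hrange : ∀ t ω, P t ω ∈ Set.Icc (0 : ℝ) 1)
    (α : ℝ) (hα : α ∈ Set.Ioc (0 : ℝ) 1)
    (hcond : ∀ β ∈ Set.Icc (0 : ℝ) 1, ∀ t : ℕ, 1 ≤ t →
      ∀ᵐ ω ∂μ, (μ[Set.indicator {ω' | P t ω' ≤ β} (fun _ => (1 : ℝ)) | ℱ (t - 1)]) ω ≤ β)
    (k : ℕ) (hk : 1 ≤ k)
    (Rk : Ω → ℕ∞)
    (hRk : ∀ ω, Rk ω = sInf {n : ℕ∞ | ∃ t : ℕ, (t : ℕ∞) = n ∧ 1 ≤ t ∧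
      k ≤ ((Finset.Icc 1 t).filter (fun s => P s ω ≤ α)).card}) :
    ENNReal.ofReal ((k : ℝ) / α) ≤ ∑' m : ℕ, μ {ω | (m : ℕ∞) < Rk ω} := by
  -- the event `m < Rk` is exactly `N m < k`
  have hset : ∀ m : ℕ, {ω | (m : ℕ∞) < Rk ω} = {ω | N P α m ω < k} := by
    intro m
    ext ω
    simp only [Set.mem_setOf_eq, hRk ω]
    constructor
    · intro h
      by_contra hle
      push_neg at hle
      have hm1 : 1 ≤ m := by
        by_contra hm0
        have : m = 0 := by omega
        subst this
        rw [N_zero] at hle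
        omega
      have hmem : (m : ℕ∞) ∈ {n : ℕ∞ | ∃ t : ℕ, (t : ℕ∞) = n ∧ 1 ≤ t ∧
          k ≤ ((Finset.Icc 1 t).filter (fun s => P s ω ≤ α)).card} :=
        ⟨m, rfl, hm1, hle⟩
      exact absurd (sInf_le hmem) (not_le.mpr h)
    · intro h
      rw [← ENat.add_one_le_iff (by simp)]
      apply le_sInf
      rintro n ⟨t, rfl, ht1, hkt⟩
      have hmt : m < t := by
        by_contra hc
        push_neg at hc
        exact absurd (le_trans hkt (N_mono P α hc ω)) (not_le.mpr h)
      exact_mod_cast Nat.succ_le_of_lt hmt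
  simp only [hset]
  set a : ℕ → ℝ≥0∞ := fun m => μ {ω | N P α m ω < k} with ha
  by_cases hS : ∑' m, a m = ⊤
  · rw [hS]; exact le_top
  -- measurability facts
  have hAmeas : ∀ s : ℕ, MeasurableSet[ℱ s] {ω | N P α s ω < k} := by
    intro s
    exact (N_meas ℱ P hadapted α s) (measurableSet_Iio (a := k))
  have hAmeas0 : ∀ s : ℕ, MeasurableSet {ω | N P α s ω < k} :=
    fun s => ℱ.le s _ (hAmeas s)
  have hPmeas : ∀ t : ℕ, MeasurableSet {ω | P t ω ≤ α} := by
    intro t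
    exact measurableSet_le (Measurable.mono (hadapted t) (ℱ.le t) le_rfl)
      measurable_const
  -- the indicator of a new alarm at time s+1
  set I : ℕ → Ω → ℝ := fun t => Set.indicator {ω' | P t ω' ≤ α} (fun _ => (1 : ℝ)) with hI
  have hIint : ∀ t : ℕ, Integrable (I t) μ :=
    fun t => (integrable_const (1 : ℝ)).indicator (hPmeas t)
  -- key conditional step
  have key : ∀ s : ℕ,
      ∫ ω, Set.indicator {ω' | N P α s ω' < k} (I (s + 1)) ω ∂μ
        ≤ α * (a s).toReal := by
    intro s
    rw [integral_indicator (hAmeas0 s)]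
    rw [← setIntegral_condExp (ℱ.le s) (hIint (s + 1)) (hAmeas s)]
    have hb : ∀ᵐ ω ∂μ, (μ[I (s + 1) | ℱ s]) ω ≤ α := by
      have := hcond α ⟨hα.1.le, hα.2⟩ (s + 1) (by omega)
      simpa [hI] using this
    calc ∫ ω in {ω | N P α s ω < k}, (μ[I (s + 1) | ℱ s]) ω ∂μ
        ≤ ∫ _ω in {ω | N P α s ω < k}, α ∂μ := by
          apply setIntegral_mono_ae integrable_condExp.integrableOn
            (integrableOn_const (measure_ne_top μ _)) hb
      _ = (a s).toReal * α := by rw [setIntegral_const, smul_eq_mul]; rfl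
      _ = α * (a s).toReal := mul_comm _ _
  -- the inequality for each horizon m
  have main : ∀ m : ℕ,
      (k : ℝ) * (μ {ω | k ≤ N P α m ω}).toReal ≤ α * (∑' n, a n).toReal := by
    intro m
    have step1 : ∫ ω, (∑ s ∈ Finset.range m,
        Set.indicator {ω' | N P α s ω' < k} (I (s + 1)) ω) ∂μ
          ≤ α * ∑ s ∈ Finset.range m, (a s).toReal := by
      rw [integral_finset_sum _ (fun s _ =>
        ((hIint (s + 1)).indicator (hAmeas0 s)))]
      rw [Finset.mul_sum]
      exact Finset.sum_le_sum fun s _ => key s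
    have step2 : (k : ℝ) * (μ {ω | k ≤ N P α m ω}).toReal
        ≤ ∫ ω, (∑ s ∈ Finset.range m,
            Set.indicator {ω' | N P α s ω' < k} (I (s + 1)) ω) ∂μ := by
      have hmeasK : MeasurableSet {ω | k ≤ N P α m ω} := by
        have := (N_meas ℱ P hadapted α m).mono (ℱ.le m) le_rfl
        exact this (measurableSet_Ici (a := k))
      have hptw : ∀ ω, Set.indicator {ω' | k ≤ N P α m ω'} (fun _ => (k : ℝ)) ω
          ≤ ∑ s ∈ Finset.range m,
            Set.indicator {ω' | N P α s ω' < k} (I (s + 1)) ω := by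
        intro ω
        have hsum : ∑ s ∈ Finset.range m,
            Set.indicator {ω' | N P α s ω' < k} (I (s + 1)) ω
              = ((min (N P α m ω) k : ℕ) : ℝ) := by
          rw [← stopped_sum P α k m ω]
          push_cast
          apply Finset.sum_congr rfl
          intro s _
          by_cases h1 : P (s + 1) ω ≤ α <;> by_cases h2 : N P α s ω < k <;>
            simp [Set.indicator, h1, h2, hI]
        rw [hsum]
        by_cases hK : k ≤ N P α m ω
        · rw [Set.indicator_of_mem (show ω ∈ {ω' | k ≤ N P α m ω'} from hK)]
          have hmin : N P α m ω ⊓ k = k := by omega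
          rw [hmin]
        · rw [Set.indicator_of_notMem (show ω ∉ {ω' | k ≤ N P α m ω'} from hK)]
          positivity
      calc (k : ℝ) * (μ {ω | k ≤ N P α m ω}).toReal
          = ∫ ω, Set.indicator {ω' | k ≤ N P α m ω'} (fun _ => (k : ℝ)) ω ∂μ := by
            rw [integral_indicator hmeasK, setIntegral_const, smul_eq_mul, mul_comm]; rfl
        _ ≤ _ := by
            apply integral_mono
              ((integrable_const ((k : ℝ))).indicator hmeasK)
              (integrable_finset_sum _ (fun s _ =>
                ((hIint (s + 1)).indicator (hAmeas0 s))))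
              hptw
    have step3 : ∑ s ∈ Finset.range m, (a s).toReal ≤ (∑' n, a n).toReal := by
      rw [← ENNReal.toReal_sum (fun s _ => ne_top_of_le_ne_top hS
        (ENNReal.le_tsum s))]
      exact ENNReal.toReal_mono hS (ENNReal.sum_le_tsum _)
    calc (k : ℝ) * (μ {ω | k ≤ N P α m ω}).toReal
        ≤ α * ∑ s ∈ Finset.range m, (a s).toReal := le_trans step2 step1
      _ ≤ α * (∑' n, a n).toReal := by
          exact mul_le_mul_of_nonneg_left step3 hα.1.le
  -- pass to the limit `m → ∞`
  have hlim : Filter.Tendsto (fun m => (k : ℝ) * (μ {ω | k ≤ N P α m ω}).toReal)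
      Filter.atTop (nhds ((k : ℝ) * 1)) := by
    apply Filter.Tendsto.const_mul
    have h0 : Filter.Tendsto a Filter.atTop (nhds 0) :=
      ENNReal.tendsto_atTop_zero_of_tsum_ne_top hS
    have h0' : Filter.Tendsto (fun m => (a m).toReal) Filter.atTop (nhds 0) := by
      have := (ENNReal.tendsto_toReal (by simp : (0 : ℝ≥0∞) ≠ ⊤)).comp h0
      simpa [Function.comp_def] using this
    have hcompl : ∀ m, (μ {ω | k ≤ N P α m ω}).toReal = 1 - (a m).toReal := by
      intro m
      have hc : {ω | k ≤ N P α m ω} = {ω | N P α m ω < k}ᶜ := by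
        ext ω; simp [not_lt]
      rw [hc, measure_compl (hAmeas0 m) (measure_ne_top μ _), measure_univ]
      rw [ENNReal.toReal_sub_of_le (prob_le_one) (by simp)]
      simp [ha]
    simp only [hcompl]
    have : Filter.Tendsto (fun m => 1 - (a m).toReal) Filter.atTop (nhds (1 - 0)) :=
      Filter.Tendsto.const_sub _ h0'
    simpa using this
  have hfinal : (k : ℝ) ≤ α * (∑' n, a n).toReal := by
    have := le_of_tendsto hlim (Filter.Eventually.of_forall main)
    simpa using this
  have hdiv : (k : ℝ) / α ≤ (∑' n, a n).toReal := by
    rw [div_le_iff₀ hα.1]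
    linarith [mul_comm α (∑' n, a n).toReal]
  calc ENNReal.ofReal ((k : ℝ) / α) ≤ ENNReal.ofReal (∑' n, a n).toReal :=
        ENNReal.ofReal_le_ofReal hdiv
    _ = ∑' n, a n := ENNReal.ofReal_toReal hS
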